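/- The polynomials W^{(L,0)}(x) = x^{L-1} + … + x + 1 and W^{(L,1)}(x) = L x^{L-1} + (L−1)x^{L-2} + … + 2x + 1 have no common root for any L ≥ 2. Consequently, no time series of finite difference dimension is left-separable from a series of the form f_n = P_1(n)λ^n with deg P_1 ≥ 1 and λ ≠ 0. -/
import Mathlib

open Polynomial Finset

/-- Trajectory space: span of lagged vectors of the first `N` values of `f`. -/
noncomputable def trajSpace (f : ℕ → ℂ) (N L : ℕ) : Submodule ℂ (Fin L → ℂ) :=
  Submodule.span ℂ {v : Fin L → ℂ | ∃ i : ℕ, i + L ≤ N ∧ v = fun j : Fin L => f (i + (j : ℕ))}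

/-- The Hermitian inner product on `Fin L → ℂ`. -/
noncomputable def hinner {L : ℕ} (u v : Fin L → ℂ) : ℂ :=
  ∑ i, (starRingEnd ℂ) (u i) * v i


noncomputable def psize (Q : Polynomial ℂ) : ℕ := if Q = 0 then 0 else Q.natDegree + 1

lemma psize_le {Q : Polynomial ℂ} {n : ℕ} (h : Q.natDegree ≤ n) : psize Q ≤ n + 1 := by
  unfold psize; split <;> omega

lemma psize_eq_zero {Q : Polynomial ℂ} : psize Q = 0 ↔ Q = 0 := by
  unfold psize; split <;> simp_all

lemma psize_zero : psize 0 = 0 := psize_eq_zero.mpr rfl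

lemma psize_of_ne {Q : Polynomial ℂ} (h : Q ≠ 0) : psize Q = Q.natDegree + 1 := by
  unfold psize; rw [if_neg h]

lemma hasseDeriv_natDegree_eq (Q : Polynomial ℂ) :
    hasseDeriv Q.natDegree Q = C (Q.coeff Q.natDegree) := by
  ext t
  rw [hasseDeriv_coeff, coeff_C]
  cases t with
  | zero => simp
  | succ t =>
    rw [coeff_eq_zero_of_natDegree_lt (by omega : Q.natDegree < t + 1 + Q.natDegree)]
    simp

lemma taylor_coeff_natDegree' (Q : Polynomial ℂ) (r : ℂ) :
    (taylor r Q).coeff Q.natDegree = Q.leadingCoeff := by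
  rw [taylor_coeff, hasseDeriv_natDegree_eq, eval_C, leadingCoeff]

/-- Key lemma: an exponential polynomial vanishing on a long enough initial window is zero. -/
lemma exp_poly_vanish : ∀ (D m : ℕ) (lam : Fin m → ℂ) (Q : Fin m → Polynomial ℂ),
    Function.Injective lam → (∀ k, lam k ≠ 0) →
    (∑ k, psize (Q k)) ≤ D →
    (∀ t : ℕ, t < D → ∑ k, (Q k).eval (t : ℂ) * lam k ^ t = 0) →
    ∀ k, Q k = 0 := by
  intro D
  induction D with
  | zero =>
    intro m lam Q _ _ hs _ k
    have h1 : ∑ k, psize (Q k) = 0 := Nat.le_zero.mp hs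
    have := (Finset.sum_eq_zero_iff (s := Finset.univ) (f := fun k => psize (Q k))).mp h1 k
      (Finset.mem_univ k)
    exact psize_eq_zero.mp this
  | succ D ih =>
    intro m lam Q hinj hne hs hwin
    by_cases hall : ∀ k, Q k = 0
    · exact hall
    push_neg at hall
    obtain ⟨m₀, hm₀⟩ := hall
    set Q' : Fin m → Polynomial ℂ := fun k =>
      if k = m₀ then lam m₀ • (taylor 1 (Q k) - Q k)
      else lam k • taylor 1 (Q k) - lam m₀ • Q k with hQ'
    have hwin' : ∀ t : ℕ, t < D → ∑ k, (Q' k).eval (t : ℂ) * lam k ^ t = 0 := by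
      intro t ht
      have e1 := hwin t (by omega)
      have e2 := hwin (t + 1) (by omega)
      have key : ∑ k, (Q' k).eval (t : ℂ) * lam k ^ t
          = (∑ k, (Q k).eval ((t + 1 : ℕ) : ℂ) * lam k ^ (t + 1))
            - lam m₀ * ∑ k, (Q k).eval (t : ℂ) * lam k ^ t := by
        rw [Finset.mul_sum, ← Finset.sum_sub_distrib]
        refine Finset.sum_congr rfl fun k _ => ?_
        by_cases hk : k = m₀
        · subst hk
          simp only [hQ', if_pos rfl, eval_smul, eval_sub, smul_eq_mul, taylor_eval,
            pow_succ, Nat.cast_add, Nat.cast_one]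
          ring
        · simp only [hQ', if_neg hk, eval_smul, eval_sub, smul_eq_mul, taylor_eval,
            pow_succ, Nat.cast_add, Nat.cast_one]
          ring
      rw [key, e1, e2]
      ring
    have hsizem : psize (Q' m₀) < psize (Q m₀) := by
      have hpm : psize (Q m₀) = (Q m₀).natDegree + 1 := psize_of_ne hm₀
      by_cases hsub : taylor 1 (Q m₀) - Q m₀ = 0
      · have h0 : Q' m₀ = 0 := by simp [hQ', hsub]
        rw [h0, psize_zero, hpm]
        omega
      · have htne : taylor (1 : ℂ) (Q m₀) ≠ 0 := by
          intro h
          apply hm₀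
          have := congrArg (taylor (-1 : ℂ)) h
          rwa [taylor_taylor, neg_add_cancel, taylor_zero', LinearMap.id_apply, map_zero] at this
        have hdeg : (taylor (1:ℂ) (Q m₀)).degree = (Q m₀).degree := by
          rw [degree_eq_natDegree htne, degree_eq_natDegree hm₀, natDegree_taylor]
        have hlc : (taylor (1:ℂ) (Q m₀)).leadingCoeff = (Q m₀).leadingCoeff := by
          rw [leadingCoeff, natDegree_taylor, taylor_coeff_natDegree']
        have hlt := degree_sub_lt hdeg htne hlc
        rw [hdeg] at hlt
        have hnd : (taylor (1:ℂ) (Q m₀) - Q m₀).natDegree < (Q m₀).natDegree :=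
          natDegree_lt_natDegree hsub hlt
        have hps : psize (Q' m₀) ≤ (taylor (1:ℂ) (Q m₀) - Q m₀).natDegree + 1 := by
          apply psize_le
          simpa [hQ'] using natDegree_smul_le (lam m₀) (taylor (1:ℂ) (Q m₀) - Q m₀)
        omega
    have hsize : ∀ k, psize (Q' k) ≤ psize (Q k) := by
      intro k
      by_cases hk : k = m₀
      · exact hk ▸ hsizem.le
      · by_cases hQk : Q k = 0
        · have h0 : Q' k = 0 := by simp [hQ', hk, hQk]
          rw [h0, psize_zero]
          omega
        · rw [psize_of_ne hQk]
          apply psize_le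
          simp only [hQ', if_neg hk]
          refine (natDegree_sub_le _ _).trans (max_le ?_ ?_)
          · exact (natDegree_smul_le _ _).trans (by rw [natDegree_taylor])
          · exact natDegree_smul_le _ _
    have hs' : ∑ k, psize (Q' k) ≤ D := by
      have hlt : ∑ k, psize (Q' k) < ∑ k, psize (Q k) :=
        Finset.sum_lt_sum (fun k _ => hsize k) ⟨m₀, Finset.mem_univ _, hsizem⟩
      omega
    have hQ'0 : ∀ k, Q' k = 0 := ih m lam Q' hinj hne hs' hwin'
    have hQk0 : ∀ k, k ≠ m₀ → Q k = 0 := by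
      intro k hk
      by_contra h0
      have h := hQ'0 k
      simp only [hQ'] at h
      rw [if_neg hk, sub_eq_zero] at h
      have hco := congrArg (fun p : Polynomial ℂ => p.coeff ((Q k).natDegree)) h
      simp only [coeff_smul, smul_eq_mul] at hco
      rw [taylor_coeff_natDegree', ← leadingCoeff] at hco
      have hlc : (Q k).leadingCoeff ≠ 0 := leadingCoeff_ne_zero.mpr h0
      exact hk (hinj (mul_right_cancel₀ hlc hco))
    have hT : taylor (1 : ℂ) (Q m₀) = Q m₀ := by
      have h : lam m₀ • (taylor (1:ℂ) (Q m₀) - Q m₀) = 0 := by simpa [hQ'] using hQ'0 m₀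
      rw [smul_eq_zero] at h
      rcases h with h | h
      · exact absurd h (hne m₀)
      · exact sub_eq_zero.mp h
    have heval : ∀ n : ℕ, (Q m₀).eval (n : ℂ) = (Q m₀).eval 0 := by
      intro n
      induction n with
      | zero => simp
      | succ n ihn =>
        have hstep : (Q m₀).eval ((n : ℂ) + 1) = (Q m₀).eval (n : ℂ) := by
          conv_rhs => rw [← hT]
          rw [taylor_eval]
        push_cast
        rw [hstep, ihn]
    have hconst : Q m₀ = C ((Q m₀).eval 0) := by
      have hroots : ({x | (Q m₀ - C ((Q m₀).eval 0)).IsRoot x} : Set ℂ).Infinite := by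
        apply Set.Infinite.mono (s := Set.range (Nat.cast : ℕ → ℂ))
        · rintro x ⟨n, rfl⟩
          simp [IsRoot, heval n]
        · exact Set.infinite_range_of_injective Nat.cast_injective
      have h := eq_zero_of_infinite_isRoot _ hroots
      exact sub_eq_zero.mp h
    have hev0 : (Q m₀).eval 0 = 0 := by
      have h0 := hwin 0 (by omega)
      rw [Finset.sum_eq_single m₀ (fun k _ hk => by rw [hQk0 k hk]; simp)
        (fun h => absurd (Finset.mem_univ m₀) h)] at h0
      simpa using h0
    have hQm0 : Q m₀ = 0 := by rw [hconst, hev0, map_zero]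
    exact absurd hQm0 hm₀

lemma geom_id (z : ℂ) (L : ℕ) : (1 - z) * ∑ k ∈ Finset.range L, ((k : ℂ) + 1) * z ^ k
    = (∑ k ∈ Finset.range L, z ^ k) - (L : ℂ) * z ^ L := by
  induction L with
  | zero => simp
  | succ L ih =>
    rw [Finset.sum_range_succ, Finset.sum_range_succ (fun k => z ^ k), mul_add, ih]
    push_cast
    ring

lemma part1 : ∀ L : ℕ, 2 ≤ L → ∀ z : ℂ,
    ¬((∑ k ∈ Finset.range L, z ^ k = 0) ∧
      (∑ k ∈ Finset.range L, ((k : ℂ) + 1) * z ^ k = 0)) := by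
  rintro L hL z ⟨h0, h1⟩
  have hid := geom_id z L
  rw [h0, h1, mul_zero] at hid
  have hLz : (L : ℂ) * z ^ L = 0 := by linear_combination hid
  have hL0 : (L : ℂ) ≠ 0 := Nat.cast_ne_zero.mpr (by omega)
  have hzL : z ^ L = 0 := (mul_eq_zero.mp hLz).resolve_left hL0
  have hz : z = 0 := pow_eq_zero_iff (by omega : L ≠ 0) |>.mp hzL
  subst hz
  rw [Finset.sum_eq_single 0 (fun k _ hk => zero_pow hk) (fun h => absurd (Finset.mem_range.mpr (by omega)) h)] at h0
  simp at h0

lemma conj_eval (P : Polynomial ℂ) (n : ℕ) :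
    (starRingEnd ℂ) (P.eval (n : ℂ)) = (P.map (starRingEnd ℂ)).eval (n : ℂ) := by
  rw [eval_map, eval₂_eq_sum_range, eval_eq_sum_range, map_sum]
  refine Finset.sum_congr rfl fun i _ => ?_
  rw [map_mul, map_pow, map_natCast]


lemma taylor_coeff_pred (Q : Polynomial ℂ) (r : ℂ) (d : ℕ) (hQ : Q.natDegree = d) (hd : 1 ≤ d) :
    (taylor r Q).coeff (d - 1) = Q.coeff (d - 1) + d * Q.coeff d * r := by
  rw [taylor_coeff]
  have h : hasseDeriv (d - 1) Q = C (Q.coeff (d - 1)) + C ((d : ℂ) * Q.coeff d) * X := by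
    ext t
    rw [hasseDeriv_coeff]
    match t with
    | 0 => simp
    | 1 =>
      have h1 : 1 + (d - 1) = d := by omega
      have h2 : d.choose (d - 1) = d := by
        obtain ⟨e, rfl⟩ : ∃ e, d = e + 1 := ⟨d - 1, by omega⟩
        simp [Nat.choose_succ_self_right]
      rw [h1, h2]
      simp [coeff_C]
    | (t + 2) =>
      rw [coeff_eq_zero_of_natDegree_lt (by omega : Q.natDegree < t + 2 + (d - 1))]
      simp [coeff_C, coeff_X]
  rw [h]
  simp

/-- The polynomials `W^{(L,0)}(x) = 1 + x + … + x^{L-1}` and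
`W^{(L,1)}(x) = 1 + 2x + … + L x^{L-1}` have no common root for `L ≥ 2`;
consequently no series of finite difference dimension is left-separable from a
series `f₁ n = P₁(n) λⁿ` with `deg P₁ ≥ 1` and `λ ≠ 0`. -/
theorem no_common_root_and_no_separability_from_modulated_polynomial :
    (∀ L : ℕ, 2 ≤ L → ∀ z : ℂ,
      ¬((∑ k ∈ Finset.range L, z ^ k = 0) ∧
        (∑ k ∈ Finset.range L, ((k : ℂ) + 1) * z ^ k = 0))) ∧
    (∀ (N L : ℕ) (f₁ f₂ : ℕ → ℂ) (P₁ : Polynomial ℂ) (lam₀ : ℂ),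
      lam₀ ≠ 0 → 1 ≤ P₁.natDegree →
      (∀ n : ℕ, f₁ n = P₁.eval (n : ℂ) * lam₀ ^ n) →
      2 * L ≤ N → P₁.natDegree + 1 < L →
      ∀ (m : ℕ) (lam : Fin m → ℂ) (P : Fin m → Polynomial ℂ),
        0 < m → Function.Injective lam → (∀ k, lam k ≠ 0) → (∀ k, P k ≠ 0) →
        (∀ n : ℕ, f₂ n = ∑ k, (P k).eval (n : ℂ) * lam k ^ n) →
        2 * (∑ k, ((P k).natDegree + 1)) ≤ N →
        ¬(∀ u ∈ trajSpace f₁ N L, ∀ v ∈ trajSpace f₂ N L, hinner u v = 0)) := by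
  refine ⟨part1, ?_⟩
  intro N L f₁ f₂ P₁ lam₀ hlam₀ hdeg hf₁ hLN hdL m lam P hm hinj hlamne hPne hf₂ hDN ortho
  set d := P₁.natDegree with hd
  have hL2 : 2 ≤ L := by omega
  set μ := (starRingEnd ℂ) lam₀ with hμdef
  have hμ : μ ≠ 0 := by
    rw [hμdef]
    intro h
    exact hlam₀ ((_root_.map_eq_zero (starRingEnd ℂ)).mp h)
  set Pq := P₁.map (starRingEnd ℂ) with hPqdef
  have hP₁0 : P₁ ≠ 0 := fun h => by simp [h, natDegree_zero] at hd; omega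
  have hPq0 : Pq ≠ 0 := map_ne_zero hP₁0
  have hPqd : Pq.natDegree = d := natDegree_map _
  have hlcq : Pq.leadingCoeff ≠ 0 := leadingCoeff_ne_zero.mpr hPq0
  have hugen : ∀ i : ℕ, i + L ≤ N → (fun j : Fin L => f₁ (i + (j : ℕ))) ∈ trajSpace f₁ N L :=
    fun i hi => Submodule.subset_span ⟨i, hi, rfl⟩
  have hvgen : ∀ i : ℕ, i + L ≤ N → (fun j : Fin L => f₂ (i + (j : ℕ))) ∈ trajSpace f₂ N L :=
    fun i hi => Submodule.subset_span ⟨i, hi, rfl⟩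
  -- Step A: windowed weighted sums of `f₂` vanish
  have hS : ∀ i' : ℕ, i' + L ≤ N →
      (∑ j ∈ Finset.range L, μ ^ j * f₂ (i' + j) = 0) ∧
      (∑ j ∈ Finset.range L, (j : ℂ) * (μ ^ j * f₂ (i' + j)) = 0) := by
    intro i' hi'
    set c : ℕ → ℂ := fun j => μ ^ j * f₂ (i' + j) with hc
    set R : Polynomial ℂ := ∑ j ∈ Finset.range L, c j • taylor (j : ℂ) Pq with hR
    have hRdeg : R.natDegree ≤ d := by
      apply natDegree_sum_le_of_forall_le
      intro j _
      exact (natDegree_smul_le _ _).trans (le_of_eq (by rw [natDegree_taylor, hPqd]))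
    have hReval : ∀ i : ℕ, i + L ≤ N → R.eval (i : ℂ) = 0 := by
      intro i hi
      have h0 := ortho _ (hugen i hi) _ (hvgen i' hi')
      have hcalc : hinner (fun j : Fin L => f₁ (i + (j : ℕ))) (fun j : Fin L => f₂ (i' + (j : ℕ)))
          = μ ^ i * R.eval (i : ℂ) := by
        unfold hinner
        rw [hR, eval_finset_sum, Finset.mul_sum,
          ← Fin.sum_univ_eq_sum_range (fun j => μ ^ i * ((c j • taylor (j : ℂ) Pq).eval (i : ℂ))) L]
        refine Finset.sum_congr rfl fun j _ => ?_
        dsimp only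
        rw [hf₁ (i + (j : ℕ)), map_mul, map_pow, conj_eval, ← hμdef, ← hPqdef,
          eval_smul, taylor_eval, smul_eq_mul, hc]
        push_cast
        rw [pow_add]
        ring
      rw [hcalc] at h0
      exact (mul_eq_zero.mp h0).resolve_left (pow_ne_zero _ hμ)
    have hR0 : R = 0 := by
      have hinjf : Function.Injective (fun t : Fin (d + 1) => ((t : ℕ) : ℂ)) :=
        fun a b hab => Fin.ext (Nat.cast_injective hab)
      apply eq_zero_of_natDegree_lt_card_of_eval_eq_zero R hinjf
      · intro t
        exact hReval t (by have := t.2; omega)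
      · rw [Fintype.card_fin]; omega
    have hcoefftop : ∀ r : ℂ, (taylor r Pq).coeff d = Pq.leadingCoeff := by
      intro r
      rw [← hPqd, taylor_coeff_natDegree']
    have hc0 : ∑ j ∈ Finset.range L, c j = 0 := by
      have h : (0 : ℂ) = ∑ j ∈ Finset.range L, c j * Pq.leadingCoeff := by
        calc (0 : ℂ) = R.coeff d := by rw [hR0, coeff_zero]
          _ = ∑ j ∈ Finset.range L, (c j • taylor (j : ℂ) Pq).coeff d := by
              rw [hR, finset_sum_coeff]
          _ = ∑ j ∈ Finset.range L, c j * Pq.leadingCoeff := by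
              refine Finset.sum_congr rfl fun j _ => ?_
              rw [coeff_smul, smul_eq_mul, hcoefftop]
      rw [← Finset.sum_mul] at h
      exact (mul_eq_zero.mp h.symm).resolve_right hlcq
    have hc1 : ∑ j ∈ Finset.range L, (j : ℂ) * c j = 0 := by
      have h : (0 : ℂ) = ∑ j ∈ Finset.range L, c j * (Pq.coeff (d - 1) + (d : ℂ) * Pq.coeff d * (j : ℂ)) := by
        calc (0 : ℂ) = R.coeff (d - 1) := by rw [hR0, coeff_zero]
          _ = ∑ j ∈ Finset.range L, (c j • taylor (j : ℂ) Pq).coeff (d - 1) := by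
              rw [hR, finset_sum_coeff]
          _ = _ := by
              refine Finset.sum_congr rfl fun j _ => ?_
              rw [coeff_smul, smul_eq_mul, taylor_coeff_pred Pq _ d hPqd hdeg]
      have hexp : ∑ j ∈ Finset.range L, c j * (Pq.coeff (d - 1) + (d : ℂ) * Pq.coeff d * (j : ℂ))
          = Pq.coeff (d - 1) * (∑ j ∈ Finset.range L, c j)
            + ((d : ℂ) * Pq.coeff d) * (∑ j ∈ Finset.range L, (j : ℂ) * c j) := by
        rw [Finset.mul_sum, Finset.mul_sum, ← Finset.sum_add_distrib]
        exact Finset.sum_congr rfl fun j _ => by ring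
      rw [hexp, hc0, mul_zero, zero_add] at h
      have hcoeq : Pq.coeff d = Pq.leadingCoeff := by rw [← hPqd]; rfl
      have hdc : (d : ℂ) * Pq.coeff d ≠ 0 :=
        mul_ne_zero (Nat.cast_ne_zero.mpr (by omega)) (by rw [hcoeq]; exact hlcq)
      exact (mul_eq_zero.mp h.symm).resolve_left hdc
    exact ⟨hc0, hc1⟩
  -- Step B
  set D := ∑ k, ((P k).natDegree + 1) with hDdef
  have main2 : ∀ w : ℕ → ℂ,
      (∀ i' : ℕ, i' + L ≤ N → ∑ j ∈ Finset.range L, w j * f₂ (i' + j) = 0) →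
      ∀ k, (∑ j ∈ Finset.range L, (w j * lam k ^ j) • taylor (j : ℂ) (P k)) = 0 := by
    intro w hw
    set Q : Fin m → Polynomial ℂ :=
      fun k => ∑ j ∈ Finset.range L, (w j * lam k ^ j) • taylor (j : ℂ) (P k) with hQ
    have hsz : ∑ k, psize (Q k) ≤ N - L + 1 := by
      calc ∑ k, psize (Q k) ≤ ∑ k, ((P k).natDegree + 1) := by
            refine Finset.sum_le_sum fun k _ => ?_
            apply psize_le
            apply natDegree_sum_le_of_forall_le
            intro j _
            exact (natDegree_smul_le _ _).trans (le_of_eq (natDegree_taylor _ _))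
        _ ≤ N - L + 1 := by omega
    have hwin : ∀ t : ℕ, t < N - L + 1 → ∑ k, (Q k).eval (t : ℂ) * lam k ^ t = 0 := by
      intro t ht
      have hwt := hw t (by omega)
      calc ∑ k, (Q k).eval (t : ℂ) * lam k ^ t
          = ∑ k, ∑ j ∈ Finset.range L, w j * ((P k).eval ((t : ℂ) + (j : ℂ)) * lam k ^ (t + j)) := by
            refine Finset.sum_congr rfl fun k _ => ?_
            simp only [hQ]
            rw [eval_finset_sum, Finset.sum_mul]
            refine Finset.sum_congr rfl fun j _ => ?_
            rw [eval_smul, taylor_eval, smul_eq_mul, pow_add]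
            ring
        _ = ∑ j ∈ Finset.range L, w j * f₂ (t + j) := by
            rw [Finset.sum_comm]
            refine Finset.sum_congr rfl fun j _ => ?_
            rw [hf₂ (t + j), Finset.mul_sum]
            refine Finset.sum_congr rfl fun k _ => ?_
            push_cast
            ring
        _ = 0 := hwt
    intro k
    exact exp_poly_vanish (N - L + 1) m lam Q hinj hlamne hsz hwin k
  -- conclude
  set k0 : Fin m := ⟨0, hm⟩ with hk0
  have hlck : (P k0).leadingCoeff ≠ 0 := leadingCoeff_ne_zero.mpr (hPne k0)
  have top : ∀ w : ℕ → ℂ,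
      (∑ j ∈ Finset.range L, (w j * lam k0 ^ j) • taylor (j : ℂ) (P k0)) = 0 →
      ∑ j ∈ Finset.range L, w j * lam k0 ^ j = 0 := by
    intro w hE
    have h := congrArg (fun p : Polynomial ℂ => p.coeff (P k0).natDegree) hE
    simp only [finset_sum_coeff, coeff_smul, smul_eq_mul, coeff_zero,
      taylor_coeff_natDegree'] at h
    rw [← Finset.sum_mul] at h
    exact (mul_eq_zero.mp h).resolve_right hlck
  have hS1' : ∀ i' : ℕ, i' + L ≤ N →
      ∑ j ∈ Finset.range L, (((j : ℂ) + 1) * μ ^ j) * f₂ (i' + j) = 0 := by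
    intro i' hi'
    obtain ⟨hA, hB⟩ := hS i' hi'
    calc ∑ j ∈ Finset.range L, (((j : ℂ) + 1) * μ ^ j) * f₂ (i' + j)
        = ∑ j ∈ Finset.range L, ((j : ℂ) * (μ ^ j * f₂ (i' + j)) + μ ^ j * f₂ (i' + j)) :=
          Finset.sum_congr rfl fun j _ => by ring
      _ = 0 := by rw [Finset.sum_add_distrib, hA, hB, add_zero]
  have hE0 := top (fun j => μ ^ j) (main2 (fun j => μ ^ j) (fun i' hi' => (hS i' hi').1) k0)
  have hE1 := top (fun j => ((j : ℂ) + 1) * μ ^ j)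
    (main2 (fun j => ((j : ℂ) + 1) * μ ^ j) hS1' k0)
  refine part1 L hL2 (μ * lam k0) ⟨?_, ?_⟩
  · calc ∑ j ∈ Finset.range L, (μ * lam k0) ^ j
        = ∑ j ∈ Finset.range L, (fun j : ℕ => μ ^ j) j * lam k0 ^ j :=
          Finset.sum_congr rfl fun j _ => by simp [mul_pow]
      _ = 0 := hE0
  · calc ∑ j ∈ Finset.range L, ((j : ℂ) + 1) * (μ * lam k0) ^ j
        = ∑ j ∈ Finset.range L, (fun j : ℕ => ((j : ℂ) + 1) * μ ^ j) j * lam k0 ^ j :=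
          Finset.sum_congr rfl fun j _ => by simp [mul_pow]; ring
      _ = 0 := hE1
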